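/- arXiv:2403.01262 — 2 statements merged into one kernel-verified Lean document; each statement's English description precedes it below -/
import Mathlib

section
/- Let G and H be finite groups such that gcd(|G|, |H|) = 1. Then the number of subgroups of the direct product G × H equals the product of the number of subgroups of G and the number of subgroups of H, i.e., Sub(G × H) = Sub(G) · Sub(H). -/
open Subgroup

private lemma mem_left_of_mem {G H : Type*} [Group G] [Group H] [Finite G] [Finite H]
    (hcop : Nat.gcd (Nat.card G) (Nat.card H) = 1) {K : Subgroup (G × H)} {a : G} {b : H}
    (hab : (a, b) ∈ K) : (a, 1) ∈ K := by
  have hco : (Nat.card H).Coprime (orderOf a) :=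
    (Nat.coprime_comm.mpr hcop).coprime_dvd_right (orderOf_dvd_natCard a)
  obtain ⟨m, hm⟩ := exists_pow_eq_self_of_coprime hco
  have h1 : ((a, b) : G × H) ^ (Nat.card H * m) = (a, 1) := by
    rw [Prod.pow_mk, pow_mul, pow_mul, hm, pow_card_eq_one', one_pow]
  rw [← h1]
  exact K.pow_mem hab _

private lemma mem_right_of_mem {G H : Type*} [Group G] [Group H] [Finite G] [Finite H]
    (hcop : Nat.gcd (Nat.card G) (Nat.card H) = 1) {K : Subgroup (G × H)} {a : G} {b : H}
    (hab : (a, b) ∈ K) : ((1 : G), b) ∈ K := by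
  have hco : (Nat.card G).Coprime (orderOf b) :=
    (Nat.coprime_iff_gcd_eq_one.mpr hcop).coprime_dvd_right (orderOf_dvd_natCard b)
  obtain ⟨m, hm⟩ := exists_pow_eq_self_of_coprime hco
  have h1 : ((a, b) : G × H) ^ (Nat.card G * m) = (1, b) := by
    rw [Prod.pow_mk, pow_mul, pow_mul, hm, pow_card_eq_one', one_pow]
  rw [← h1]
  exact K.pow_mem hab _

private lemma key {G H : Type*} [Group G] [Group H] [Finite G] [Finite H]
    (hcop : Nat.gcd (Nat.card G) (Nat.card H) = 1) (K : Subgroup (G × H)) :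
    K = (K.map (MonoidHom.fst G H)).prod (K.map (MonoidHom.snd G H)) := by
  apply le_antisymm
  · exact le_prod_iff.mpr ⟨le_refl _, le_refl _⟩
  · rintro ⟨a, b⟩ ⟨⟨⟨a', b'⟩, hab', rfl⟩, ⟨⟨a'', b''⟩, hab'', rfl⟩⟩
    have h1 := mem_left_of_mem hcop hab'
    have h2 := mem_right_of_mem hcop hab''
    simpa using K.mul_mem h1 h2

theorem sub_prod_of_coprime (G H : Type*) [Group G] [Group H] [Finite G] [Finite H]
    (hcop : Nat.gcd (Nat.card G) (Nat.card H) = 1) :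
    Nat.card (Subgroup (G × H)) = Nat.card (Subgroup G) * Nat.card (Subgroup H) := by
  rw [← Nat.card_prod]
  refine Nat.card_congr ⟨fun K => (K.map (MonoidHom.fst G H), K.map (MonoidHom.snd G H)),
    fun p => p.1.prod p.2, fun K => (key hcop K).symm, fun ⟨A, B⟩ => ?_⟩
  ext1
  · ext x
    simp only [mem_map, mem_prod, MonoidHom.coe_fst]
    constructor
    · rintro ⟨⟨a, b⟩, ⟨ha, hb⟩, rfl⟩; exact ha
    · intro hx; exact ⟨(x, 1), ⟨hx, B.one_mem⟩, rfl⟩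
  · ext x
    simp only [mem_map, mem_prod, MonoidHom.coe_snd]
    constructor
    · rintro ⟨⟨a, b⟩, ⟨ha, hb⟩, rfl⟩; exact hb
    · intro hx; exact ⟨(1, x), ⟨A.one_mem, hx⟩, rfl⟩
end

section
/- Let G be a finite nilpotent group such that Sub(G) is a prime number. Then G is a p-group for some prime p. -/
open Finset

section PiCoprime

variable {ι : Type*} [Fintype ι] [DecidableEq ι] {H : ι → Type*} [∀ i, Group (H i)]
  [∀ i, Finite (H i)]

theorem pi_univ_map_eval (f : ∀ i, Subgroup (H i)) (i : ι) :
    (Subgroup.pi Set.univ f).map (Pi.evalMonoidHom H i) = f i := by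
  apply le_antisymm
  · rintro x ⟨y, hy, rfl⟩
    exact hy i (Set.mem_univ i)
  · intro x hx
    refine ⟨Pi.mulSingle i x, fun j _ => ?_, Pi.mulSingle_eq_same i x⟩
    rcases eq_or_ne j i with rfl | hne
    · simpa using hx
    · rw [Pi.mulSingle_eq_of_ne hne]
      exact (f j).one_mem

theorem map_eval_pi (hcop : Pairwise fun i j => Nat.Coprime (Nat.card (H i)) (Nat.card (H j)))
    (K : Subgroup (∀ i, H i)) :
    Subgroup.pi Set.univ (fun i => K.map (Pi.evalMonoidHom H i)) = K := by
  apply le_antisymm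
  · intro x hx
    have hsingle : ∀ i, Pi.mulSingle i (x i) ∈ K := by
      intro i
      obtain ⟨y, hy, hyi⟩ := hx i (Set.mem_univ i)
      have hcm : (Nat.card (H i)).Coprime (∏ j ∈ univ.erase i, Nat.card (H j)) :=
        Nat.Coprime.prod_right fun j hj => hcop (Finset.ne_of_mem_erase hj).symm
      obtain ⟨n, hn1, hn2⟩ := Nat.chineseRemainder hcm 1 0
      have key : y ^ n = Pi.mulSingle i (x i) := by
        funext j
        rcases eq_or_ne j i with rfl | hne
        · have : y j ^ n = y j ^ 1 :=
            pow_eq_pow_iff_modEq.mpr (hn1.of_dvd (orderOf_dvd_natCard (y j)))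
          simpa [this] using hyi
        · have hdvd : orderOf (y j) ∣ n := by
            refine dvd_trans (dvd_trans (orderOf_dvd_natCard (y j)) ?_)
              ((Nat.modEq_zero_iff_dvd).mp hn2)
            exact Finset.dvd_prod_of_mem _ (Finset.mem_erase.mpr ⟨hne, Finset.mem_univ j⟩)
          have : y j ^ n = 1 := orderOf_dvd_iff_pow_eq_one.mp hdvd
          simp [Pi.mulSingle_eq_of_ne hne, this]
      have hxi : Pi.mulSingle i (x i) = y ^ n := by rw [key]
      rw [hxi]
      exact K.pow_mem hy n
    rw [← Finset.noncommProd_mulSingle x]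
    exact K.noncommProd_mem _ fun i _ => hsingle i
  · intro x hx i _
    exact ⟨x, hx, rfl⟩

noncomputable def subgroupPiEquiv
    (hcop : Pairwise fun i j => Nat.Coprime (Nat.card (H i)) (Nat.card (H j))) :
    Subgroup (∀ i, H i) ≃ ∀ i, Subgroup (H i) where
  toFun K := fun i => K.map (Pi.evalMonoidHom H i)
  invFun f := Subgroup.pi Set.univ f
  left_inv K := map_eval_pi hcop K
  right_inv f := funext fun i => pi_univ_map_eval f i

theorem card_subgroup_pi
    (hcop : Pairwise fun i j => Nat.Coprime (Nat.card (H i)) (Nat.card (H j))) :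
    Nat.card (Subgroup (∀ i, H i)) = ∏ i, Nat.card (Subgroup (H i)) := by
  rw [Nat.card_congr (subgroupPiEquiv hcop), Nat.card_pi]

end PiCoprime

/-- Subgroup count is invariant under MulEquiv. -/
def subgroupEquivOfMulEquiv {G H : Type*} [Group G] [Group H] (e : G ≃* H) :
    Subgroup G ≃ Subgroup H where
  toFun K := K.map e.toMonoidHom
  invFun K := K.map e.symm.toMonoidHom
  left_inv K := by ext x; simp [Subgroup.mem_map]
  right_inv K := by ext x; simp [Subgroup.mem_map]

theorem isPGroup_of_sub_prime_of_nilpotent (G : Type*) [Group G] [Finite G]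
    [Group.IsNilpotent G] (h : (Nat.card (Subgroup G)).Prime) :
    ∃ p : ℕ, p.Prime ∧ IsPGroup p G := by
  classical
  obtain ⟨e⟩ : Nonempty
      ((∀ p : (Nat.card G).primeFactors, ∀ P : Sylow p G, (↑P : Subgroup G)) ≃* G) :=
    ((isNilpotent_of_finite_tfae (G := G)).out 0 4).mp ‹Group.IsNilpotent G›
  set ps := (Nat.card G).primeFactors with hps
  have hG0 : Nat.card G ≠ 0 := Nat.card_pos.ne'
  have hfact : ∀ p : ps, Fact (Nat.Prime (p : ℕ)) :=
    fun p => ⟨Nat.prime_of_mem_primeFactors p.2⟩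
  have hcard : ∀ p : ps, ∃ n : ℕ,
      Nat.card (∀ P : Sylow (p : ℕ) G, (↑P : Subgroup G)) = (p : ℕ) ^ n := by
    intro p
    haveI := hfact p
    haveI : Fintype (Sylow (p : ℕ) G) := Fintype.ofFinite _
    choose n hn using fun P : Sylow (p : ℕ) G => IsPGroup.iff_card.mp P.isPGroup'
    refine ⟨∑ P : Sylow (p : ℕ) G, n P, ?_⟩
    rw [Nat.card_pi]
    simp_rw [hn]
    rw [Finset.prod_pow_eq_pow_sum]
  have hcop : Pairwise fun p q : ps =>
      Nat.Coprime (Nat.card (∀ P : Sylow (p : ℕ) G, (↑P : Subgroup G)))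
        (Nat.card (∀ P : Sylow (q : ℕ) G, (↑P : Subgroup G))) := by
    intro p q hpq
    obtain ⟨a, ha⟩ := hcard p
    obtain ⟨b, hb⟩ := hcard q
    rw [ha, hb]
    have hne : (p : ℕ) ≠ (q : ℕ) := fun hc => hpq (Subtype.ext hc)
    exact Nat.Coprime.pow a b ((Nat.coprime_primes (hfact p).out (hfact q).out).mpr hne)
  have hprod : Nat.card (Subgroup G)
      = ∏ p : ps, Nat.card (Subgroup (∀ P : Sylow (p : ℕ) G, (↑P : Subgroup G))) := by
    rw [Nat.card_congr (subgroupEquivOfMulEquiv e.symm)]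
    exact card_subgroup_pi hcop
  have htwo : ∀ p : ps,
      2 ≤ Nat.card (Subgroup (∀ P : Sylow (p : ℕ) G, (↑P : Subgroup G))) := by
    intro p
    haveI := hfact p
    have hnt' : ∀ P : Sylow (p : ℕ) G, Nontrivial (↑P : Subgroup G) := by
      intro P
      refine (IsPGroup.nontrivial_iff_card P.isPGroup').mpr
        ⟨(Nat.card G).factorization (p : ℕ), ?_, P.card_eq_multiplicity⟩
      exact Nat.Prime.factorization_pos_of_dvd (hfact p).out hG0
        (Nat.dvd_of_mem_primeFactors p.2)
    have hnt : Nontrivial (∀ P : Sylow (p : ℕ) G, (↑P : Subgroup G)) :=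
      Pi.nontrivial_at (Classical.arbitrary (Sylow (p : ℕ) G))
    have hpos : 0 < Nat.card (Subgroup (∀ P : Sylow (p : ℕ) G, (↑P : Subgroup G))) :=
      Nat.card_pos
    have hne1 : Nat.card (Subgroup (∀ P : Sylow (p : ℕ) G, (↑P : Subgroup G))) ≠ 1 := by
      intro hc
      have hsub := (Nat.card_eq_one_iff_unique.mp hc).1
      exact absurd bot_ne_top (by
        simp only [ne_eq, not_not]
        exact hsub.elim ⊥ ⊤)
    omega
  rcases Finset.eq_empty_or_nonempty ps with hps_empty | ⟨p0, hp0⟩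
  · have h1 : Nat.card G = 1 := by
      rcases Nat.primeFactors_eq_empty.mp hps_empty with h0 | h1
      · exact absurd h0 hG0
      · exact h1
    exact ⟨2, Nat.prime_two, IsPGroup.of_card (by rw [h1, pow_zero])⟩
  · set p : ps := ⟨p0, hp0⟩ with hp
    have hsingle : ps = {(p : ℕ)} := by
      by_contra hne
      have hq : ∃ q ∈ ps, q ≠ (p : ℕ) := by
        by_contra hq
        push_neg at hq
        exact hne (Finset.eq_singleton_iff_unique_mem.mpr ⟨p.2, hq⟩)
      obtain ⟨q, hq, hqp⟩ := hq
      set f := fun r : ps => Nat.card (Subgroup (∀ P : Sylow (r : ℕ) G, (↑P : Subgroup G)))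
        with hf
      have h1 : f p * ∏ r ∈ Finset.univ.erase p, f r = ∏ r : ps, f r :=
        Finset.mul_prod_erase Finset.univ f (Finset.mem_univ p)
      rw [hprod, ← h1] at h
      have hrpos : 0 < ∏ r ∈ Finset.univ.erase p, f r :=
        Finset.prod_pos fun r _ => lt_of_lt_of_le two_pos (htwo r)
      have hrest : 2 ≤ ∏ r ∈ Finset.univ.erase p, f r := by
        have hdvd : f ⟨q, hq⟩ ∣ ∏ r ∈ Finset.univ.erase p, f r :=
          Finset.dvd_prod_of_mem f
            (Finset.mem_erase.mpr ⟨fun hc => hqp (congrArg Subtype.val hc), Finset.mem_univ _⟩)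
        exact le_trans (htwo ⟨q, hq⟩) (Nat.le_of_dvd hrpos hdvd)
      have h2 : 2 ≤ f p := htwo p
      rcases h.eq_one_or_self_of_dvd (f p) ⟨_, rfl⟩ with hc | hc
      · omega
      · have h3 : ∏ r ∈ Finset.univ.erase p, f r = 1 :=
          Nat.eq_of_mul_eq_mul_left (by omega)
            (hc.symm.trans (mul_one (f p)).symm)
        omega
    obtain ⟨k, hk⟩ : ∃ k, Nat.card G = (p : ℕ) ^ k := by
      refine ⟨(Nat.card G).primeFactorsList.length,
        Nat.eq_prime_pow_of_unique_prime_dvd hG0 ?_⟩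
      intro d hd hdvd
      have hmem : d ∈ ps := Nat.mem_primeFactors.mpr ⟨hd, hdvd, hG0⟩
      rw [hsingle] at hmem
      exact Finset.mem_singleton.mp hmem
    exact ⟨p, (hfact p).out, IsPGroup.of_card hk⟩
end
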